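/- arXiv:2502.13375 — 2 statements merged into one kernel-verified Lean document; each statement's English description precedes it below -/
import Mathlib

section
/- Let c be an equilibrium under the difference-seeking utility U_# on a finite simple graph G with minimum degree δ, and let u, v be vertices with c(u) ≠ c(v) and U_#(c,u) = U_#(c,v) = r. Then either at least δ − r neighbors of u carry type c(v), or at least δ − r neighbors of v carry type c(u). -/
open SimpleGraph Finset

/-- The coloring obtained from `c` by swapping the colors (agents) at `u` and `v`. -/
def swapColoring {V : Type*} [DecidableEq V] {t : ℕ} (c : V → Fin t) (u v : V) : V → Fin t :=
  fun w => if w = u then c v else if w = v then c u else c w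

/-- The binary utility `U_b`: 1 if some neighbor has a different type, 0 otherwise. -/
def Ub {V : Type*} [Fintype V] (G : SimpleGraph V) [DecidableRel G.Adj]
    {t : ℕ} (c : V → Fin t) (v : V) : ℕ :=
  if ∃ w ∈ G.neighborFinset v, c w ≠ c v then 1 else 0

/-- The difference-seeking utility `U_#`: the number of neighbors of a different type. -/
def Usharp {V : Type*} [Fintype V] (G : SimpleGraph V) [DecidableRel G.Adj]
    {t : ℕ} (c : V → Fin t) (v : V) : ℕ :=
  ((G.neighborFinset v).filter fun w => c w ≠ c v).card

/-- `T_c(v)`: the set of types present in the neighborhood of `v`. -/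
def typesIn {V : Type*} [Fintype V] (G : SimpleGraph V) [DecidableRel G.Adj]
    {t : ℕ} (c : V → Fin t) (v : V) : Finset (Fin t) :=
  (G.neighborFinset v).image c

/-- The variety-seeking utility `U_τ`: the number of types other than `c v` in the
neighborhood of `v`. -/
def Utau {V : Type*} [Fintype V] (G : SimpleGraph V) [DecidableRel G.Adj]
    {t : ℕ} (c : V → Fin t) (v : V) : ℕ :=
  ((typesIn G c v).erase (c v)).card

/-- The swap of `u` and `v` is improving under utility `U`. -/
def ImprovingSwap {V : Type*} [DecidableEq V] {t : ℕ}
    (U : (V → Fin t) → V → ℕ) (c : V → Fin t) (u v : V) : Prop :=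
  U c u < U (swapColoring c u v) v ∧ U c v < U (swapColoring c u v) u

/-- `c` is an equilibrium under the utility `U`: no improving swap exists. -/
def Equilibrium {V : Type*} [DecidableEq V] {t : ℕ}
    (U : (V → Fin t) → V → ℕ) (c : V → Fin t) : Prop :=
  ∀ u v : V, c u ≠ c v → ¬ ImprovingSwap U c u v

/-- The number of monochromatic edges of `c`. -/
def monoCount {V : Type*} [Fintype V] [DecidableEq V] (G : SimpleGraph V) [DecidableRel G.Adj]
    {t : ℕ} (c : V → Fin t) : ℕ :=
  (G.edgeFinset.filter fun e => (e.map c).IsDiag).card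

/-- The number of colorful edges of `c`. -/
def ceCount {V : Type*} [Fintype V] [DecidableEq V] (G : SimpleGraph V) [DecidableRel G.Adj]
    {t : ℕ} (c : V → Fin t) : ℕ :=
  (G.edgeFinset.filter fun e => ¬ (e.map c).IsDiag).card

/-- The cycle graph on `ZMod n`: `i` adjacent to `i + 1` and `i - 1`. -/
def cycleZMod (n : ℕ) : SimpleGraph (ZMod n) := SimpleGraph.circulantGraph {1}

instance (n : ℕ) : DecidableRel (cycleZMod n).Adj := fun a b =>
  decidable_of_iff (a ≠ b ∧ (a - b = 1 ∨ b - a = 1)) (by simp [cycleZMod])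

instance {α β : Type*} (G : SimpleGraph α) (H : SimpleGraph β)
    [DecidableRel G.Adj] [DecidableRel H.Adj] [DecidableEq α] [DecidableEq β] :
    DecidableRel (G □ H).Adj := fun x y =>
  decidable_of_iff (G.Adj x.1 y.1 ∧ x.2 = y.2 ∨ H.Adj x.2 y.2 ∧ x.1 = y.1)
    (SimpleGraph.boxProd_adj).symm

lemma swapColoring_comm {V : Type*} [DecidableEq V] {t : ℕ} (c : V → Fin t) (u v : V)
    (huv : c u ≠ c v) : swapColoring c u v = swapColoring c v u := by
  funext w
  unfold swapColoring
  by_cases h1 : w = u <;> by_cases h2 : w = v <;> simp_all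

lemma key_lemma {V : Type*} [Fintype V] [DecidableEq V] (G : SimpleGraph V) [DecidableRel G.Adj]
    {t : ℕ} (c : V → Fin t) (u v : V) (huv : c u ≠ c v) (r : ℕ)
    (h : Usharp G (swapColoring c u v) v ≤ r) :
    G.minDegree - r ≤ ((G.neighborFinset v).filter fun w => c w = c u).card := by
  have hne : v ≠ u := fun h => huv (h ▸ rfl)
  have hcv : swapColoring c u v v = c u := by simp [swapColoring, hne]
  have hsub : (G.neighborFinset v).filter (fun w => ¬ c w = c u) ⊆
      (G.neighborFinset v).filter (fun w => swapColoring c u v w ≠ swapColoring c u v v) := by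
    intro w hw
    simp only [mem_filter, mem_neighborFinset] at hw ⊢
    refine ⟨hw.1, ?_⟩
    rw [hcv]
    have hwv : w ≠ v := hw.1.ne'
    by_cases hwu : w = u
    · simp [swapColoring, hwu, hne, Ne.symm huv]
    · simpa [swapColoring, hwu, hwv] using hw.2
  have hle : ((G.neighborFinset v).filter (fun w => ¬ c w = c u)).card ≤ r :=
    le_trans (Finset.card_le_card hsub) h
  have hsplit := Finset.card_filter_add_card_filter_not
    (s := G.neighborFinset v) (p := fun w => c w = c u)
  have hdeg : G.minDegree ≤ (G.neighborFinset v).card := by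
    rw [card_neighborFinset_eq_degree]; exact G.minDegree_le_degree v
  omega

theorem stmt1 {V : Type*} [Fintype V] [DecidableEq V] (G : SimpleGraph V) [DecidableRel G.Adj]
    {t : ℕ} (ht : 2 ≤ t) (c : V → Fin t) (heq : Equilibrium (Usharp G) c)
    (u v : V) (huv : c u ≠ c v) (r : ℕ)
    (hu : Usharp G c u = r) (hv : Usharp G c v = r) :
    G.minDegree - r ≤ ((G.neighborFinset u).filter fun w => c w = c v).card ∨
      G.minDegree - r ≤ ((G.neighborFinset v).filter fun w => c w = c u).card := by
  have hns := heq u v huv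
  unfold ImprovingSwap at hns
  push_neg at hns
  rw [hu, hv] at hns
  by_cases h1 : Usharp G (swapColoring c u v) v ≤ r
  · exact Or.inr (key_lemma G c u v huv r h1)
  · left
    have h2 : Usharp G (swapColoring c u v) u ≤ r := hns (lt_of_not_ge h1)
    rw [swapColoring_comm c u v huv] at h2
    exact key_lemma G c v u huv.symm r h2
end

section
/- Let t ≥ 3, let C_{tk} be the cycle on tk vertices (tk ≥ 3), and let c be a coloring with t types where each color class has size exactly k. If c is an equilibrium under the difference-seeking utility U_#, then sw(c, U_#) ≥ 2(t−1)k. -/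
open SimpleGraph Finset

lemma two_ne (n : ℕ) [NeZero n] (hn : 3 ≤ n) : (2 : ZMod n) ≠ 0 := by
  intro h
  have h2 : ((2:ℕ) : ZMod n) = 0 := by push_cast; exact h
  rw [ZMod.natCast_eq_zero_iff] at h2
  have := Nat.le_of_dvd (by norm_num) h2
  omega

lemma one_ne (n : ℕ) [NeZero n] (hn : 3 ≤ n) : (1 : ZMod n) ≠ 0 := by
  haveI : Fact (1 < n) := ⟨by omega⟩
  exact one_ne_zero

lemma nbr (n : ℕ) [NeZero n] (hn : 3 ≤ n) (v : ZMod n) :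
    (cycleZMod n).neighborFinset v = {v + 1, v - 1} := by
  have h1 := one_ne n hn
  ext w
  rw [mem_neighborFinset]
  simp only [mem_neighborFinset, cycleZMod, SimpleGraph.circulantGraph, fromRel_adj,
    Set.mem_singleton_iff, mem_insert, mem_singleton]
  constructor
  · rintro ⟨hne, h | h⟩
    · right; rw [sub_eq_iff_eq_add] at h; rw [h]; ring
    · left; rw [sub_eq_iff_eq_add] at h; rw [h]; ring
  · rintro (rfl | rfl)
    · exact ⟨by intro h; exact h1 (by linear_combination -h), Or.inr (by ring)⟩
    · exact ⟨by intro h; exact h1 (by linear_combination h), Or.inl (by ring)⟩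

lemma usharp_pair (n : ℕ) [NeZero n] (hn : 3 ≤ n) {t : ℕ} (c : ZMod n → Fin t) (v : ZMod n) :
    Usharp (cycleZMod n) c v =
      (if c (v + 1) ≠ c v then 1 else 0) + (if c (v - 1) ≠ c v then 1 else 0) := by
  have hne : v + 1 ≠ v - 1 := by
    intro h
    exact two_ne n hn (by linear_combination h)
  rw [Usharp, nbr n hn, filter_insert, filter_singleton]
  by_cases h1 : c (v + 1) ≠ c v <;> by_cases h2 : c (v - 1) ≠ c v <;>
    simp [h1, h2, hne]

lemma sum_usharp (n : ℕ) [NeZero n] (hn : 3 ≤ n) {t : ℕ} (c : ZMod n → Fin t) :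
    ∑ v, Usharp (cycleZMod n) c v =
      2 * ((univ : Finset (ZMod n)).filter fun v => c (v + 1) ≠ c v).card := by
  have hpt : ∀ v : ZMod n, Usharp (cycleZMod n) c v =
      (if c (v + 1) ≠ c v then 1 else 0) + (if c (v - 1) ≠ c v then 1 else 0) :=
    usharp_pair n hn c
  rw [Finset.sum_congr rfl fun v _ => hpt v, Finset.sum_add_distrib]
  have hre : ∑ v : ZMod n, (if c (v - 1) ≠ c v then 1 else 0) =
      ∑ v : ZMod n, (if c (v + 1) ≠ c v then 1 else 0) := by
    apply Fintype.sum_equiv (Equiv.subRight (1 : ZMod n))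
    intro v
    simp only [Equiv.subRight_apply, sub_add_cancel]
    rcases eq_or_ne (c (v - 1)) (c v) with h | h
    · rw [if_neg (by simp [h]), if_neg (by simp [h.symm])]
    · rw [if_pos h, if_pos h.symm]
  rw [hre, Finset.card_filter, two_mul]

section facts
variable {n t : ℕ} [NeZero n] {c : ZMod n → Fin t}

omit [NeZero n] in
lemma swap_ne_left {u v w : ZMod n} (h : w ≠ u) (h' : w ≠ v) :
    swapColoring c u v w = c w := by simp [swapColoring, h, h']

lemma factA (hn : 3 ≤ n) (heq : Equilibrium (Usharp (cycleZMod n)) c)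
    (u v : ZMod n) (hu1 : c (u + 1) = c u) (hu2 : c (u - 1) = c u)
    (hv : c v ≠ c u) (hv1 : c (v + 1) = c v ∨ c (v - 1) = c v) : False := by
  have h1 : (1 : ZMod n) ≠ 0 := one_ne n hn
  have huv : u ≠ v := fun h => hv (by rw [h])
  have ecu : swapColoring c u v u = c v := by simp [swapColoring]
  have ecv : swapColoring c u v v = c u := by simp [swapColoring, huv.symm]
  apply heq u v (Ne.symm hv)
  constructor
  · have h0 : Usharp (cycleZMod n) c u = 0 := by
      rw [usharp_pair n hn]; simp [hu1, hu2]
    rw [h0, usharp_pair n hn]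
    obtain ⟨s, hs, hcs⟩ : ∃ s, (s = v + 1 ∨ s = v - 1) ∧ c s = c v := by
      rcases hv1 with h | h
      · exact ⟨v + 1, Or.inl rfl, h⟩
      · exact ⟨v - 1, Or.inr rfl, h⟩
    have hsu : s ≠ u := fun h => hv (by rw [← h, hcs])
    have hsv : s ≠ v := by
      rcases hs with rfl | rfl
      · intro h; exact h1 (by linear_combination h)
      · intro h; exact h1 (by linear_combination -h)
    have hcs' : swapColoring c u v s = c v := by rw [swap_ne_left hsu hsv, hcs]
    rcases hs with rfl | rfl
    · rw [ecv, hcs', if_pos hv]; omega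
    · rw [ecv, hcs', if_pos hv]; omega
  · have hle : Usharp (cycleZMod n) c v ≤ 1 := by
      rw [usharp_pair n hn]
      rcases hv1 with h | h <;> simp only [h, ne_eq, not_true_eq_false, if_false] <;>
        split <;> omega
    have hnu1 : u + 1 ≠ u := fun h => h1 (by linear_combination h)
    have hnu2 : u - 1 ≠ u := fun h => h1 (by linear_combination -h)
    have hv1' : u + 1 ≠ v := fun h => hv (by rw [← h, hu1])
    have hv2' : u - 1 ≠ v := fun h => hv (by rw [← h, hu2])
    have g1 : swapColoring c u v (u + 1) = c u := by rw [swap_ne_left hnu1 hv1', hu1]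
    have g2 : swapColoring c u v (u - 1) = c u := by rw [swap_ne_left hnu2 hv2', hu2]
    have h2 : Usharp (cycleZMod n) (swapColoring c u v) u = 2 := by
      rw [usharp_pair n hn, ecu, g1, g2]; simp [Ne.symm hv]
    omega

omit [NeZero n] in
lemma swap_comm {u v : ZMod n} (h : u ≠ v) :
    swapColoring c u v = swapColoring c v u := by
  funext w
  by_cases h1 : w = u
  · subst h1; simp [swapColoring, h]
  · by_cases h2 : w = v
    · subst h2; simp [swapColoring, Ne.symm h]
    · simp [swapColoring, h1, h2]

lemma factB_aux (hn : 3 ≤ n) (p q : ZMod n) (hpq : c p ≠ c q)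
    (hq1 : c (q + 1) = c q ∨ c (q - 1) = c q)
    (hq2 : (c (q + 1) ≠ c q ∧ c (q + 1) ≠ c p) ∨ (c (q - 1) ≠ c q ∧ c (q - 1) ≠ c p)) :
    Usharp (cycleZMod n) (swapColoring c p q) q = 2 := by
  have h1 : (1 : ZMod n) ≠ 0 := one_ne n hn
  have hqp : q ≠ p := fun h => hpq (by rw [h])
  have ecq : swapColoring c p q q = c p := by simp [swapColoring, hqp]
  rcases hq1 with h | h
  · rcases hq2 with ⟨h2a, _⟩ | ⟨_, h2b⟩
    · exact absurd h h2a
    · have hsp : q + 1 ≠ p := fun hh => hpq (by rw [← hh, h])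
      have hsq : q + 1 ≠ q := fun hh => h1 (by linear_combination hh)
      have hop : q - 1 ≠ p := fun hh => h2b (by rw [hh])
      have hoq : q - 1 ≠ q := fun hh => h1 (by linear_combination -hh)
      have g1 : swapColoring c p q (q + 1) = c q := by rw [swap_ne_left hsp hsq, h]
      have g2 : swapColoring c p q (q - 1) = c (q - 1) := swap_ne_left hop hoq
      rw [usharp_pair n hn, ecq, g1, g2, if_pos (Ne.symm hpq), if_pos h2b]
  · rcases hq2 with ⟨_, h2b⟩ | ⟨h2a, _⟩
    · have hsp : q - 1 ≠ p := fun hh => hpq (by rw [← hh, h])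
      have hsq : q - 1 ≠ q := fun hh => h1 (by linear_combination -hh)
      have hop : q + 1 ≠ p := fun hh => h2b (by rw [hh])
      have hoq : q + 1 ≠ q := fun hh => h1 (by linear_combination hh)
      have g1 : swapColoring c p q (q - 1) = c q := by rw [swap_ne_left hsp hsq, h]
      have g2 : swapColoring c p q (q + 1) = c (q + 1) := swap_ne_left hop hoq
      rw [usharp_pair n hn, ecq, g1, g2, if_pos (Ne.symm hpq), if_pos h2b]
    · exact absurd h h2a

lemma factB (hn : 3 ≤ n) (heq : Equilibrium (Usharp (cycleZMod n)) c)
    (p q : ZMod n) (hpq : c p ≠ c q)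
    (hp1 : c (p + 1) = c p ∨ c (p - 1) = c p)
    (hq1 : c (q + 1) = c q ∨ c (q - 1) = c q)
    (hp2 : (c (p + 1) ≠ c p ∧ c (p + 1) ≠ c q) ∨ (c (p - 1) ≠ c p ∧ c (p - 1) ≠ c q))
    (hq2 : (c (q + 1) ≠ c q ∧ c (q + 1) ≠ c p) ∨ (c (q - 1) ≠ c q ∧ c (q - 1) ≠ c p)) :
    False := by
  have hne : p ≠ q := fun h => hpq (by rw [h])
  apply heq p q hpq
  constructor
  · rw [factB_aux hn p q hpq hq1 hq2]
    rw [usharp_pair n hn]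
    rcases hp1 with h | h <;> simp only [h, ne_eq, not_true_eq_false, if_false] <;>
      split <;> omega
  · rw [swap_comm hne, factB_aux hn q p (Ne.symm hpq) hp1 hp2]
    rw [usharp_pair n hn]
    rcases hq1 with h | h <;> simp only [h, ne_eq, not_true_eq_false, if_false] <;>
      split <;> omega

def Pflank {n t : ℕ} (c : ZMod n → Fin t) (x y : Fin t) : Prop :=
  ∀ u : ZMod n, c (u + 1) = c u → c u = x → c (u - 1) = y ∧ c (u + 2) = y

section caseB
variable {n t : ℕ} [NeZero n] {c : ZMod n → Fin t}
variable (hn : 3 ≤ n) (hB : ∀ w : ZMod n, c (w + 1) ≠ c w ∨ c (w - 1) ≠ c w)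

omit [NeZero n] in
include hB in
lemma flankB (v : ZMod n) (hv : c (v + 1) = c v) :
    c (v - 1) ≠ c v ∧ c (v + 2) ≠ c v := by
  constructor
  · rcases hB v with h | h
    · exact absurd hv h
    · exact h
  · have e1 : v + 1 + 1 = v + 2 := by ring
    have e2 : v + 1 - 1 = v := by ring
    rcases hB (v + 1) with h | h
    · rw [e1, hv] at h; exact h
    · rw [e2] at h; exact absurd hv.symm h

omit [NeZero n] in
include hB in
lemma ept (v ov : ZMod n) (hv : c (v + 1) = c v) (hside : ov = v - 1 ∨ ov = v + 2)
    (x : Fin t) (hx : c ov ≠ x) :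
    ∃ p, c p = c v ∧ (c (p + 1) = c p ∨ c (p - 1) = c p) ∧
      ((c (p + 1) ≠ c p ∧ c (p + 1) ≠ x) ∨ (c (p - 1) ≠ c p ∧ c (p - 1) ≠ x)) := by
  rcases hside with rfl | rfl
  · exact ⟨v, rfl, Or.inl hv, Or.inr ⟨(flankB hB v hv).1, hx⟩⟩
  · refine ⟨v + 1, hv, ?_, ?_⟩
    · right; rw [show v + 1 - 1 = v by ring]; exact hv.symm
    · left
      rw [show v + 1 + 1 = v + 2 by ring, hv]
      exact ⟨(flankB hB v hv).2, hx⟩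

include hn hB in
lemma conC (heq : Equilibrium (Usharp (cycleZMod n)) c)
    (v w : ZMod n) (hv : c (v + 1) = c v) (hw : c (w + 1) = c w) (hvw : c v ≠ c w)
    (ov : ZMod n) (hov : ov = v - 1 ∨ ov = v + 2)
    (ow : ZMod n) (how : ow = w - 1 ∨ ow = w + 2) :
    c ov = c w ∨ c ow = c v := by
  by_contra hcon
  push_neg at hcon
  obtain ⟨p, hp0, hp1, hp2⟩ := ept hB v ov hv hov (c w) hcon.1
  obtain ⟨q, hq0, hq1, hq2⟩ := ept hB w ow hw how (c v) hcon.2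
  rw [← hq0] at hp2
  rw [← hp0] at hq2
  exact factB hn heq p q (by rw [hp0, hq0]; exact hvw) hp1 hq1 hp2 hq2

include hn hB in
lemma pairP (heq : Equilibrium (Usharp (cycleZMod n)) c)
    (v w : ZMod n) (hv : c (v + 1) = c v) (hw : c (w + 1) = c w) (hvw : c v ≠ c w) :
    Pflank c (c v) (c w) ∨ Pflank c (c w) (c v) := by
  by_cases hP : Pflank c (c v) (c w)
  · exact Or.inl hP
  · right
    rw [Pflank] at hP
    push_neg at hP
    obtain ⟨u, hu1, hu2, hu3⟩ := hP
    obtain ⟨ou, hou, hcou⟩ : ∃ ou, (ou = u - 1 ∨ ou = u + 2) ∧ c ou ≠ c w := by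
      by_cases hh : c (u - 1) = c w
      · exact ⟨u + 2, Or.inr rfl, hu3 hh⟩
      · exact ⟨u - 1, Or.inl rfl, hh⟩
    intro u' hu'1 hu'2
    have hcu : c u ≠ c u' := by rw [hu2, hu'2]; exact hvw
    constructor
    · rcases conC hn hB heq u u' hu1 hu'1 hcu ou hou (u' - 1) (Or.inl rfl) with h | h
      · exact absurd (h.trans hu'2) hcou
      · rw [h, hu2]
    · rcases conC hn hB heq u u' hu1 hu'1 hcu ou hou (u' + 2) (Or.inr rfl) with h | h
      · exact absurd (h.trans hu'2) hcou
      · rw [h, hu2]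

omit [NeZero n] in
lemma uniqP (v : ZMod n) (hv : c (v + 1) = c v) {y z : Fin t}
    (h1 : Pflank c (c v) y) (h2 : Pflank c (c v) z) : y = z := by
  rw [← (h1 v hv rfl).1, ← (h2 v hv rfl).1]

include hn hB in
lemma tripleP (heq : Equilibrium (Usharp (cycleZMod n)) c)
    (v0 v1 v2 : ZMod n) (h0 : c (v0 + 1) = c v0) (h1 : c (v1 + 1) = c v1)
    (h2 : c (v2 + 1) = c v2) (h01 : c v0 ≠ c v1) (h02 : c v0 ≠ c v2) (h12 : c v1 ≠ c v2) :
    (Pflank c (c v0) (c v1) ∧ Pflank c (c v1) (c v2) ∧ Pflank c (c v2) (c v0)) ∨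
    (Pflank c (c v0) (c v2) ∧ Pflank c (c v2) (c v1) ∧ Pflank c (c v1) (c v0)) := by
  rcases pairP hn hB heq v0 v1 h0 h1 h01 with hab | hba
  · left
    have hca : Pflank c (c v2) (c v0) := by
      rcases pairP hn hB heq v0 v2 h0 h2 h02 with h | h
      · exact absurd (uniqP v0 h0 hab h) h12
      · exact h
    have hbc : Pflank c (c v1) (c v2) := by
      rcases pairP hn hB heq v1 v2 h1 h2 h12 with h | h
      · exact h
      · exact absurd (uniqP v2 h2 hca h) h01
    exact ⟨hab, hbc, hca⟩
  · right
    have hcb : Pflank c (c v2) (c v1) := by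
      rcases pairP hn hB heq v1 v2 h1 h2 h12 with h | h
      · exact absurd (uniqP v1 h1 hba h) h02
      · exact h
    have hac : Pflank c (c v0) (c v2) := by
      rcases pairP hn hB heq v0 v2 h0 h2 h02 with h | h
      · exact h
      · exact absurd (uniqP v2 h2 h hcb) h01
    exact ⟨hac, hcb, hba⟩

include hn hB in
lemma no4 (heq : Equilibrium (Usharp (cycleZMod n)) c)
    (v0 v1 v2 v3 : ZMod n) (h0 : c (v0 + 1) = c v0) (h1 : c (v1 + 1) = c v1)
    (h2 : c (v2 + 1) = c v2) (h3 : c (v3 + 1) = c v3)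
    (h01 : c v0 ≠ c v1) (h02 : c v0 ≠ c v2) (h03 : c v0 ≠ c v3)
    (h12 : c v1 ≠ c v2) (h13 : c v1 ≠ c v3) (h23 : c v2 ≠ c v3) : False := by
  rcases tripleP hn hB heq v0 v1 v2 h0 h1 h2 h01 h02 h12 with ⟨Pab, Pbc, _⟩ | ⟨Pac, _, Pba⟩ <;>
    rcases tripleP hn hB heq v0 v1 v3 h0 h1 h3 h01 h03 h13 with ⟨Pab', Pbd, _⟩ | ⟨Pad, _, Pba'⟩
  · exact h23 (uniqP v1 h1 Pbc Pbd)
  · exact h13 (uniqP v0 h0 Pab Pad)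
  · exact h12 (uniqP v0 h0 Pab' Pac)
  · exact h23 (uniqP v0 h0 Pac Pad)

end caseB

section count
variable {n t k : ℕ} [NeZero n] {c : ZMod n → Fin t}

lemma count2 (hn : 3 ≤ n) {a b : Fin t} (hab : a ≠ b) (hP : Pflank c a b)
    (hall : ∀ v : ZMod n, c (v + 1) = c v → c v = a ∨ c v = b)
    (hsb : ((univ : Finset (ZMod n)).filter fun v => c v = b).card = k) :
    ((univ : Finset (ZMod n)).filter fun v => c (v + 1) = c v).card ≤ k := by
  rw [← hsb]
  apply Finset.card_le_card_of_injOn (fun v => if c v = b then v else v - 1)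
  · intro v hv
    simp only [mem_filter, mem_univ, true_and, coe_filter, Set.mem_setOf_eq] at hv ⊢
    by_cases h : c v = b
    · simp [h]
    · rw [if_neg h]
      have ha : c v = a := (hall v hv).resolve_right h
      exact (hP v hv ha).1
  · intro v hv w hw hfvw
    simp only [coe_filter, mem_univ, true_and, Set.mem_setOf_eq] at hv hw
    by_cases h1 : c v = b <;> by_cases h2 : c w = b <;> simp only [h1, h2, if_pos, if_neg,
      if_true, if_false] at hfvw
    · exact hfvw
    · -- v = w - 1
      exfalso
      subst hfvw
      rw [show w - 1 + 1 = w from by ring] at hv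
      exact h2 (hv.trans h1)
    · exfalso
      subst hfvw
      rw [show v - 1 + 1 = v from by ring] at hw
      exact h1 (hw.trans h2)
    · linear_combination hfvw
lemma ineq3 (hn : 3 ≤ n) (hB : ∀ w : ZMod n, c (w + 1) ≠ c w ∨ c (w - 1) ≠ c w)
    {x y z : Fin t} (hxy : x ≠ y) (hxz : x ≠ z) (hyz : y ≠ z)
    (hPxy : Pflank c x y) (hPyz : Pflank c y z)
    (hsy : ((univ : Finset (ZMod n)).filter fun v => c v = y).card = k) :
    ((univ : Finset (ZMod n)).filter fun v => c (v + 1) = c v ∧ c v = x).card +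
      2 * ((univ : Finset (ZMod n)).filter fun v => c (v + 1) = c v ∧ c v = y).card ≤ k := by
  classical
  set X := (univ : Finset (ZMod n)).filter fun v => c (v + 1) = c v ∧ c v = x with hX
  set Y := (univ : Finset (ZMod n)).filter fun v => c (v + 1) = c v ∧ c v = y with hY
  set Y1 := Y.image (fun v => v + 1) with hY1
  set X1 := X.image (fun v => v - 1) with hX1
  have cY1 : Y1.card = Y.card := Finset.card_image_of_injective _ (add_left_injective 1)
  have cX1 : X1.card = X.card :=
    Finset.card_image_of_injective _ (fun a b h => by linear_combination h)
  have d1 : Disjoint Y Y1 := by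
    rw [Finset.disjoint_left]
    intro w hw hw1
    simp only [hY, mem_filter, mem_univ, true_and] at hw
    simp only [hY1, hY, mem_image, mem_filter, mem_univ, true_and] at hw1
    obtain ⟨v, ⟨hv1, hv2⟩, rfl⟩ := hw1
    rcases hB (v + 1) with h | h
    · exact h hw.1
    · rw [show v + 1 - 1 = v from by ring] at h
      exact h hv1.symm
  have d2 : Disjoint (Y ∪ Y1) X1 := by
    rw [Finset.disjoint_left]
    intro w hw hw1
    simp only [hX1, hX, mem_image, mem_filter, mem_univ, true_and] at hw1
    obtain ⟨v, ⟨hv1, hv2⟩, rfl⟩ := hw1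
    rw [Finset.mem_union] at hw
    rcases hw with hw | hw
    · simp only [hY, mem_filter, mem_univ, true_and] at hw
      rw [show v - 1 + 1 = v from by ring] at hw
      exact hxy (hv2 ▸ hw.2 ▸ hw.1 : x = y)
    · simp only [hY1, hY, mem_image, mem_filter, mem_univ, true_and] at hw
      obtain ⟨u, ⟨hu1, hu2⟩, huv⟩ := hw
      have hz : c (u + 2) = z := (hPyz u hu1 hu2).2
      have : u + 2 = v := by linear_combination huv
      rw [this, hv2] at hz
      exact hxz hz
  have hsub : Y ∪ Y1 ∪ X1 ⊆ (univ : Finset (ZMod n)).filter fun v => c v = y := by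
    intro w hw
    simp only [mem_filter, mem_univ, true_and]
    rw [Finset.mem_union, Finset.mem_union] at hw
    rcases hw with (hw | hw) | hw
    · simp only [hY, mem_filter, mem_univ, true_and] at hw
      exact hw.2
    · simp only [hY1, hY, mem_image, mem_filter, mem_univ, true_and] at hw
      obtain ⟨v, ⟨hv1, hv2⟩, rfl⟩ := hw
      exact hv1.trans hv2
    · simp only [hX1, hX, mem_image, mem_filter, mem_univ, true_and] at hw
      obtain ⟨v, ⟨hv1, hv2⟩, rfl⟩ := hw
      exact (hPxy v hv1 hv2).1
  have hcard := Finset.card_le_card hsub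
  rw [Finset.card_union_of_disjoint d2, Finset.card_union_of_disjoint d1, cY1, cX1, hsy] at hcard
  omega

end count

theorem stmt14 (t k : ℕ) (ht : 3 ≤ t) (hn : 3 ≤ t * k) [NeZero (t * k)]
    (c : ZMod (t * k) → Fin t)
    (hsize : ∀ i : Fin t, ((Finset.univ : Finset (ZMod (t * k))).filter fun v => c v = i).card = k)
    (heq : Equilibrium (Usharp (cycleZMod (t * k))) c) :
    2 * (t - 1) * k ≤ ∑ v, Usharp (cycleZMod (t * k)) c v := by
  classical
  rw [sum_usharp (t * k) hn c]
  have hsplit : ((univ : Finset (ZMod (t * k))).filter fun v => c (v + 1) ≠ c v).card +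
      ((univ : Finset (ZMod (t * k))).filter fun v => c (v + 1) = c v).card = t * k := by
    have := Finset.card_filter_add_card_filter_not
      (s := (univ : Finset (ZMod (t * k)))) (p := fun v => c (v + 1) ≠ c v)
    simp only [not_not, ne_eq] at this ⊢
    rw [this, Finset.card_univ, ZMod.card]
  have hM : ((univ : Finset (ZMod (t * k))).filter fun v => c (v + 1) = c v).card ≤ k := by
    by_cases hInt : ∃ u : ZMod (t * k), c (u + 1) = c u ∧ c (u - 1) = c u
    · obtain ⟨u, hu1, hu2⟩ := hInt
      refine le_trans (Finset.card_le_card ?_) (le_of_eq (hsize (c u)))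
      intro v hv
      simp only [mem_filter, mem_univ, true_and] at hv ⊢
      by_contra hne
      exact factA hn heq u v hu1 hu2 hne (Or.inl hv)
    · push_neg at hInt
      have hB : ∀ w : ZMod (t * k), c (w + 1) ≠ c w ∨ c (w - 1) ≠ c w := by
        intro w
        by_cases h : c (w + 1) = c w
        · exact Or.inr (hInt w h)
        · exact Or.inl h
      rcases Finset.eq_empty_or_nonempty
          ((univ : Finset (ZMod (t * k))).filter fun v => c (v + 1) = c v) with he | ⟨v0, hv0⟩
      · rw [he]; simp
      · simp only [mem_filter, mem_univ, true_and] at hv0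
        by_cases h2 : ∀ v : ZMod (t * k), c (v + 1) = c v → c v = c v0
        · refine le_trans (Finset.card_le_card ?_) (le_of_eq (hsize (c v0)))
          intro v hv
          simp only [mem_filter, mem_univ, true_and] at hv ⊢
          exact h2 v hv
        · push_neg at h2
          obtain ⟨v1, hv1, hb⟩ := h2
          by_cases h3 : ∀ v : ZMod (t * k), c (v + 1) = c v → c v = c v0 ∨ c v = c v1
          · rcases pairP hn hB heq v0 v1 hv0 hv1 (Ne.symm hb) with hP | hP
            · exact count2 hn (Ne.symm hb) hP h3 (hsize (c v1))
            · exact count2 hn hb hP (fun v hv => (h3 v hv).symm) (hsize (c v0))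
          · push_neg at h3
            obtain ⟨v2, hv2, hd1, hd2⟩ := h3
            have h4 : ∀ v : ZMod (t * k), c (v + 1) = c v →
                c v = c v0 ∨ c v = c v1 ∨ c v = c v2 := by
              intro v hv
              by_contra hcon
              push_neg at hcon
              exact no4 hn hB heq v0 v1 v2 v hv0 hv1 hv2 hv (Ne.symm hb) (Ne.symm hd1)
                (Ne.symm hcon.1) (Ne.symm hd2) (Ne.symm hcon.2.1) (Ne.symm hcon.2.2)
            have hsum : ((univ : Finset (ZMod (t * k))).filter fun v => c (v + 1) = c v).card ≤
                ((univ : Finset (ZMod (t * k))).filter fun v =>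
                  c (v + 1) = c v ∧ c v = c v0).card +
                ((univ : Finset (ZMod (t * k))).filter fun v =>
                  c (v + 1) = c v ∧ c v = c v1).card +
                ((univ : Finset (ZMod (t * k))).filter fun v =>
                  c (v + 1) = c v ∧ c v = c v2).card := by
              calc ((univ : Finset (ZMod (t * k))).filter fun v => c (v + 1) = c v).card
                  ≤ (((univ : Finset (ZMod (t * k))).filter fun v =>
                      c (v + 1) = c v ∧ c v = c v0) ∪
                    ((univ : Finset (ZMod (t * k))).filter fun v =>
                      c (v + 1) = c v ∧ c v = c v1) ∪
                    ((univ : Finset (ZMod (t * k))).filter fun v =>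
                      c (v + 1) = c v ∧ c v = c v2)).card := by
                    apply Finset.card_le_card
                    intro v hv
                    simp only [mem_filter, mem_univ, true_and, Finset.mem_union] at hv ⊢
                    rcases h4 v hv with h | h | h
                    · exact Or.inl (Or.inl ⟨hv, h⟩)
                    · exact Or.inl (Or.inr ⟨hv, h⟩)
                    · exact Or.inr ⟨hv, h⟩
                _ ≤ _ := le_trans (Finset.card_union_le _ _)
                    (by have := Finset.card_union_le
                          (((univ : Finset (ZMod (t * k))).filter fun v =>
                            c (v + 1) = c v ∧ c v = c v0))
                          (((univ : Finset (ZMod (t * k))).filter fun v =>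
                            c (v + 1) = c v ∧ c v = c v1))
                        omega)
            have hab : c v0 ≠ c v1 := Ne.symm hb
            have had : c v0 ≠ c v2 := Ne.symm hd1
            have hbd : c v1 ≠ c v2 := Ne.symm hd2
            rcases tripleP hn hB heq v0 v1 v2 hv0 hv1 hv2 hab had hbd with
              ⟨P1, P2, P3⟩ | ⟨P1, P2, P3⟩
            · have i1 := ineq3 (k := k) hn hB hab had hbd P1 P2 (hsize (c v1))
              have i2 := ineq3 (k := k) hn hB hbd (Ne.symm hab) (Ne.symm had) P2 P3
                (hsize (c v2))
              have i3 := ineq3 (k := k) hn hB (Ne.symm had) (Ne.symm hbd) hab P3 P1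
                (hsize (c v0))
              omega
            · have i1 := ineq3 (k := k) hn hB had hab (Ne.symm hbd) P1 P2 (hsize (c v2))
              have i2 := ineq3 (k := k) hn hB (Ne.symm hbd) (Ne.symm had) (Ne.symm hab) P2 P3
                (hsize (c v1))
              have i3 := ineq3 (k := k) hn hB (Ne.symm hab) hbd had P3 P1 (hsize (c v0))
              omega
  have e : 2 * (t - 1) * k = 2 * ((t * k) - k) := by
    rw [mul_assoc, Nat.sub_mul, one_mul]
  have hk : k ≤ t * k := Nat.le_mul_of_pos_left k (by omega)
  omega
end facts
end
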